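/- Let f be a polynomial in three variables over ℂ (an element of MvPolynomial (Fin 3) ℂ) and let λ₁, λ₂, λ₃ ∈ ℂ. If λ₁·x₁·∂f/∂x₁ + λ₂·x₂·∂f/∂x₂ + λ₃·x₃·∂f/∂x₃ = 0 (i.e. f is a first integral of the linear diagonal vector field with eigenvalues λ₁, λ₂, λ₃), then for every multi-index N = (n₁,n₂,n₃) with λ₁n₁ + λ₂n₂ + λ₃n₃ ≠ 0, the coefficient of x^N in f vanishes. In particular, in the absence of a resonance λ₁n₁ + λ₂n₂ + λ₃n₃ = 0 with N ≠ 0, the only such first integrals are constants. -/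

import Mathlib

open MvPolynomial Finsupp


lemma aux {σ : Type*} (i : σ) (N : σ →₀ ℕ) (f : MvPolynomial σ ℂ) :
    coeff N (X i * pderiv i f) = N i * coeff N f := by
  classical
  induction f using MvPolynomial.induction_on' with
  | monomial s a =>
    rw [pderiv_monomial]
    by_cases h : s i = 0
    · simp only [h, Nat.cast_zero, mul_zero, map_zero, MulZeroClass.mul_zero, coeff_zero]
      by_cases hs : s = N
      · subst hs; simp [coeff_monomial, h]
      · simp [coeff_monomial, hs]
    · have key : Finsupp.single i 1 + (s - Finsupp.single i 1) = s := by
        ext j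
        by_cases hj : j = i
        · subst hj
          simp only [Finsupp.add_apply, Finsupp.single_eq_same, Finsupp.tsub_apply]; omega
        · simp [Finsupp.single_eq_of_ne hj]
      have : X i * monomial (s - Finsupp.single i 1) (a * s i)
          = monomial s (a * s i) := by
        rw [X, monomial_mul, one_mul, key]
      rw [this, coeff_monomial, coeff_monomial]
      by_cases hs : s = N
      · subst hs; simp; ring
      · simp [hs]
  | add p q hp hq =>
    simp only [map_add, mul_add, coeff_add, hp, hq]


/-- If `f ∈ ℂ[x₁,x₂,x₃]` is a first integral of the linear diagonal vector
field with eigenvalues `λ₁, λ₂, λ₃`, i.e.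
`λ₁x₁∂f/∂x₁ + λ₂x₂∂f/∂x₂ + λ₃x₃∂f/∂x₃ = 0`, then the coefficient of `x^N` in
`f` vanishes for every multi-index `N` with `λ₁n₁ + λ₂n₂ + λ₃n₃ ≠ 0`.  In
particular, in the absence of a nontrivial resonance, the only such first
integrals are the constants. -/
theorem coeff_eq_zero_of_first_integral (f : MvPolynomial (Fin 3) ℂ) (l₁ l₂ l₃ : ℂ)
    (hf : C l₁ * X 0 * pderiv 0 f + C l₂ * X 1 * pderiv 1 f + C l₃ * X 2 * pderiv 2 f = 0) :
    (∀ N : Fin 3 →₀ ℕ, l₁ * N 0 + l₂ * N 1 + l₃ * N 2 ≠ 0 →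
        MvPolynomial.coeff N f = 0) ∧
    ((∀ N : Fin 3 →₀ ℕ, N ≠ 0 → l₁ * N 0 + l₂ * N 1 + l₃ * N 2 ≠ 0) →
        ∃ c : ℂ, f = C c) := by
  have key : ∀ N : Fin 3 →₀ ℕ, l₁ * N 0 + l₂ * N 1 + l₃ * N 2 ≠ 0 → coeff N f = 0 := by
    intro N hN
    have h := congrArg (coeff N) hf
    simp only [coeff_add, coeff_zero, mul_assoc, coeff_C_mul, aux] at h
    have : (l₁ * N 0 + l₂ * N 1 + l₃ * N 2) * coeff N f = 0 := by
      rw [← h]; ring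
    exact (mul_eq_zero.mp this).resolve_left hN
  refine ⟨key, fun hres => ⟨coeff 0 f, ?_⟩⟩
  ext N
  rw [coeff_C]
  by_cases hN : N = 0
  · subst hN; simp
  · rw [if_neg (fun h => hN h.symm)]
    exact key N (hres N hN)
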